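/- Suppose τ, g ∈ Aut_ℂ(K) satisfy τ(x) = x⁻¹, τ(y) = y⁻¹ and g(x) = −x, g(y) = −y. Then τ ∘ τ = id, and there exists σ ∈ Aut_ℂ(K) such that σ ∘ τ ∘ σ⁻¹ = g; that is, the standard quadratic involution of the plane is conjugate in the Cremona group to a linear involution. -/

import Mathlib

set_option maxHeartbeats 1000000
set_option synthInstance.maxHeartbeats 200000


/-- The field `K = ℂ(x, y)` of rational functions in two variables over `ℂ`, realized as the
fraction field of the polynomial ring `ℂ[x, y]`. Its group of `ℂ`-algebra automorphisms
`K ≃ₐ[ℂ] K` is the plane Cremona group `Cr(2)`. -/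
noncomputable abbrev PlaneFunctionField : Type :=
  FractionRing (MvPolynomial (Fin 2) ℂ)

/-- The element `x` of `K = ℂ(x, y)`. -/
noncomputable def Xf : PlaneFunctionField :=
  algebraMap (MvPolynomial (Fin 2) ℂ) PlaneFunctionField (MvPolynomial.X 0)

/-- The element `y` of `K = ℂ(x, y)`. -/
noncomputable def Yf : PlaneFunctionField :=
  algebraMap (MvPolynomial (Fin 2) ℂ) PlaneFunctionField (MvPolynomial.X 1)

namespace CremonaAux

abbrev A2 : Type := MvPolynomial (Fin 2) ℂ
abbrev K : Type := PlaneFunctionField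

lemma ext0 {f f' : K →ₐ[ℂ] K}
    (h : ∀ p : A2, f (algebraMap A2 K p) = f' (algebraMap A2 K p)) : f = f' := by
  have h2 : f.toRingHom = f'.toRingHom := by
    apply IsLocalization.ringHom_ext (nonZeroDivisors A2)
    refine RingHom.ext fun p => ?_
    simpa using h p
  exact AlgHom.ext fun a => RingHom.congr_fun h2 a

lemma algHom_ext {f f' : K →ₐ[ℂ] K} (hx : f Xf = f' Xf) (hy : f Yf = f' Yf) : f = f' := by
  apply ext0
  intro p
  have h3 : f.comp (IsScalarTower.toAlgHom ℂ A2 K) = f'.comp (IsScalarTower.toAlgHom ℂ A2 K) := by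
    apply MvPolynomial.algHom_ext
    intro i
    fin_cases i
    · exact hx
    · exact hy
  exact AlgHom.congr_fun h3 p

lemma equiv_ext {e e' : K ≃ₐ[ℂ] K} (hx : e Xf = e' Xf) (hy : e Yf = e' Yf) : e = e' := by
  have : e.toAlgHom = e'.toAlgHom := algHom_ext hx hy
  exact AlgEquiv.ext fun a => AlgHom.congr_fun this a

/-- The affine substitution `X i ↦ C a * X i + C b`. -/
noncomputable def affA (a b : ℂ) : A2 →ₐ[ℂ] A2 :=
  MvPolynomial.aeval fun i => MvPolynomial.C a * MvPolynomial.X i + MvPolynomial.C b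

lemma affA_X (a b : ℂ) (i : Fin 2) :
    affA a b (MvPolynomial.X i) = MvPolynomial.C a * MvPolynomial.X i + MvPolynomial.C b := by
  simp [affA]

lemma affA_comp (a b a' b' : ℂ) (h1 : a' * a = 1) (h2 : a' * b + b' = 0) :
    (affA a b).comp (affA a' b') = AlgHom.id ℂ A2 := by
  apply MvPolynomial.algHom_ext
  intro i
  simp only [AlgHom.comp_apply, affA_X, AlgHom.id_apply, map_add, map_mul,
    MvPolynomial.algHom_C, MvPolynomial.algebraMap_eq]
  rw [mul_add, ← mul_assoc, ← map_mul, ← map_mul, add_assoc, ← map_add, h1, h2, map_one,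
    map_zero, one_mul, add_zero]

/-- The affine automorphism of `A2`. -/
noncomputable def affE (a b a' b' : ℂ) (h1 : a' * a = 1) (h2 : a' * b + b' = 0)
    (h1' : a * a' = 1) (h2' : a * b' + b = 0) : A2 ≃ₐ[ℂ] A2 :=
  AlgEquiv.ofAlgHom (affA a b) (affA a' b') (affA_comp a b a' b' h1 h2)
    (affA_comp a' b' a b h1' h2')

lemma affE_apply (a b a' b' : ℂ) (h1 : a' * a = 1) (h2 : a' * b + b' = 0)
    (h1' : a * a' = 1) (h2' : a * b' + b = 0) (p : A2) :
    affE a b a' b' h1 h2 h1' h2' p = affA a b p := rfl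

/-- Lift an injective `ℂ`-alg hom of `A2` to the fraction field. -/
noncomputable def liftK (e : A2 →ₐ[ℂ] A2) (he : Function.Injective e) : K →ₐ[ℂ] K :=
  IsFractionRing.liftAlgHom (g := (IsScalarTower.toAlgHom ℂ A2 K).comp e)
    (by
      have h : Function.Injective (IsScalarTower.toAlgHom ℂ A2 K) :=
        IsFractionRing.injective A2 K
      exact h.comp he)

lemma liftK_algebraMap (e : A2 →ₐ[ℂ] A2) (he : Function.Injective e) (p : A2) :
    liftK e he (algebraMap A2 K p) = algebraMap A2 K (e p) := by
  exact IsFractionRing.lift_algebraMap (K := K)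
    (g := ((IsScalarTower.toAlgHom ℂ A2 K).comp e).toRingHom) ((IsFractionRing.injective A2 K).comp he) p

/-- Lift an algebra automorphism of `A2` to the fraction field. -/
noncomputable def liftKe (e : A2 ≃ₐ[ℂ] A2) : K ≃ₐ[ℂ] K :=
  AlgEquiv.ofAlgHom (liftK e.toAlgHom e.injective) (liftK e.symm.toAlgHom e.symm.injective)
    (by
      apply ext0
      intro p
      rw [AlgHom.comp_apply, AlgHom.id_apply]
      exact (congrArg _ (liftK_algebraMap _ _ p)).trans ((liftK_algebraMap _ _ _).trans (by simp)))
    (by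
      apply ext0
      intro p
      rw [AlgHom.comp_apply, AlgHom.id_apply]
      exact (congrArg _ (liftK_algebraMap _ _ p)).trans ((liftK_algebraMap _ _ _).trans (by simp)))

lemma liftKe_algebraMap (e : A2 ≃ₐ[ℂ] A2) (p : A2) :
    liftKe e (algebraMap A2 K p) = algebraMap A2 K (e p) :=
  liftK_algebraMap e.toAlgHom e.injective p

lemma algMap_C (c : ℂ) : algebraMap A2 K (MvPolynomial.C c) = algebraMap ℂ K c := by
  rw [IsScalarTower.algebraMap_apply ℂ A2 K, MvPolynomial.algebraMap_eq]

lemma key_ne (c : ℂ) (i : Fin 2) :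
    algebraMap ℂ K c + algebraMap A2 K (MvPolynomial.X i) ≠ 0 := by
  intro hc
  rw [← algMap_C, ← map_add] at hc
  have h0 : (MvPolynomial.C c + MvPolynomial.X i : A2) = 0 := by
    apply IsFractionRing.injective A2 K
    rw [map_zero]
    exact hc
  have h1 := congrArg (MvPolynomial.coeff (Finsupp.single i 1)) h0
  simp [MvPolynomial.coeff_X, MvPolynomial.coeff_C, eq_comm, Finsupp.single_eq_zero] at h1

end CremonaAux

open CremonaAux

/-- The standard quadratic involution `(x, y) ↦ (x⁻¹, y⁻¹)` of the plane is an involution and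
is conjugate in the Cremona group to the linear involution `(x, y) ↦ (−x, −y)`. -/
theorem standard_quadratic_involution_conjugate_linear
    (τ g : PlaneFunctionField ≃ₐ[ℂ] PlaneFunctionField)
    (hτx : τ Xf = Xf⁻¹) (hτy : τ Yf = Yf⁻¹)
    (hgx : g Xf = -Xf) (hgy : g Yf = -Yf) :
    τ * τ = 1 ∧ ∃ σ : PlaneFunctionField ≃ₐ[ℂ] PlaneFunctionField, σ * τ * σ⁻¹ = g := by
  constructor
  · apply equiv_ext
    · rw [AlgEquiv.mul_apply, hτx, map_inv₀, hτx, inv_inv, AlgEquiv.one_apply]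
    · rw [AlgEquiv.mul_apply, hτy, map_inv₀, hτy, inv_inv, AlgEquiv.one_apply]
  · have h1 : (-1 : ℂ) * (-1) = 1 := by norm_num
    have h2 : (-1 : ℂ) * 1 + 1 = 0 := by norm_num
    have h1' : (2⁻¹ : ℂ) * 2 = 1 := by norm_num
    have h2' : (2⁻¹ : ℂ) * (-1) + 2⁻¹ = 0 := by norm_num
    have h1'' : (2 : ℂ) * 2⁻¹ = 1 := by norm_num
    have h2'' : (2 : ℂ) * 2⁻¹ + (-1) = 0 := by norm_num
    set La : K ≃ₐ[ℂ] K := liftKe (affE (-1) 1 (-1) 1 h1 h2 h1 h2) with hLa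
    set Lm : K ≃ₐ[ℂ] K := liftKe (affE 2 (-1) 2⁻¹ 2⁻¹ h1' h2' h1'' h2'') with hLm
    -- values on generators
    have haX : La Xf = 1 - Xf := by
      rw [hLa, Xf, liftKe_algebraMap, affE_apply, affA_X, map_add, map_mul, algMap_C, algMap_C,
        map_neg, map_one]
      ring
    have haY : La Yf = 1 - Yf := by
      rw [hLa, Yf, liftKe_algebraMap, affE_apply, affA_X, map_add, map_mul, algMap_C, algMap_C,
        map_neg, map_one]
      ring
    have hmX : Lm Xf = 2 * Xf - 1 := by
      rw [hLm, Xf, liftKe_algebraMap, affE_apply, affA_X, map_add, map_mul, algMap_C, algMap_C,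
        map_neg, map_one, map_ofNat]
      ring
    have hmY : Lm Yf = 2 * Yf - 1 := by
      rw [hLm, Yf, liftKe_algebraMap, affE_apply, affA_X, map_add, map_mul, algMap_C, algMap_C,
        map_neg, map_one, map_ofNat]
      ring
    -- nonvanishing facts
    have h1mx : (1 : K) - Xf ≠ 0 := by
      have h := key_ne (-1) 0
      rw [map_neg, map_one, ← Xf] at h
      intro h'; apply h; linear_combination -h'
    have h1px : (1 : K) + Xf ≠ 0 := by
      have h := key_ne 1 0
      rwa [map_one, ← Xf] at h
    have h1my : (1 : K) - Yf ≠ 0 := by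
      have h := key_ne (-1) 1
      rw [map_neg, map_one, ← Yf] at h
      intro h'; apply h; linear_combination -h'
    have h1py : (1 : K) + Yf ≠ 0 := by
      have h := key_ne 1 1
      rwa [map_one, ← Yf] at h
    have e1 : ∀ t : K, (1 : K) - t ≠ 0 → (2 : K) * (1 - t)⁻¹ - 1 = (1 + t) / (1 - t) := by
      intro t ht
      field_simp
      ring
    have e2 : ∀ t : K, (1 : K) + t ≠ 0 → (2 : K) * (1 + t)⁻¹ - 1 = (1 - t) / (1 + t) := by
      intro t ht
      field_simp
      ring
    set σ : K ≃ₐ[ℂ] K := La * τ * Lm with hσ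
    refine ⟨σ, ?_⟩
    rw [mul_inv_eq_iff_eq_mul]
    have hσX : σ Xf = 2 * (1 - Xf)⁻¹ - 1 := by
      rw [hσ, AlgEquiv.mul_apply, AlgEquiv.mul_apply, hmX, map_sub, map_mul, map_ofNat, map_one,
        hτx, map_sub, map_mul, map_ofNat, map_one, map_inv₀, haX]
    have hσY : σ Yf = 2 * (1 - Yf)⁻¹ - 1 := by
      rw [hσ, AlgEquiv.mul_apply, AlgEquiv.mul_apply, hmY, map_sub, map_mul, map_ofNat, map_one,
        hτy, map_sub, map_mul, map_ofNat, map_one, map_inv₀, haY]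
    apply equiv_ext
    · rw [AlgEquiv.mul_apply σ τ Xf, AlgEquiv.mul_apply g σ Xf, hτx, map_inv₀, hσX,
        map_sub, map_mul, map_ofNat, map_one, map_inv₀, map_sub, map_one, hgx, sub_neg_eq_add,
        e1 Xf h1mx, e2 Xf h1px, inv_div]
    · rw [AlgEquiv.mul_apply σ τ Yf, AlgEquiv.mul_apply g σ Yf, hτy, map_inv₀, hσY,
        map_sub, map_mul, map_ofNat, map_one, map_inv₀, map_sub, map_one, hgy, sub_neg_eq_add,
        e1 Yf h1my, e2 Yf h1py, inv_div]
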